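/- Let b < −6 be real and let n ≥ 1 be an integer with 2^{2^n} ≥ 8√(−b). Define f(z) = z^{2^n} − √(−b), g(z) = z² + b, and Q = g ∘ f, and let H be the connected component of g^{-1}(D̄(0,2)) containing −√(−b). Then: (1) Q^{-1}(Ā(0,1/2,2)) ⊆ Ā(0,1/2,2), where Ā(0,1/2,2) = {z ∈ ℂ : 1/2 ≤ |z| ≤ 2}; (2) D(0,1/2) ⊆ Q^{-1}(D(0,1/2)); (3) D(0,1/2) ⊆ f^{-1}(H). -/

import Mathlib

/-- Let `b < −6` and `n ≥ 1` with `2^{2^n} ≥ 8√(−b)`. With `f(z) = z^{2^n} − √(−b)`,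
`g(z) = z² + b`, `Q = g ∘ f`, and `H` the connected component of `g⁻¹(D̄(0,2))` containing
`−√(−b)`: (1) `Q⁻¹(Ā(0,1/2,2)) ⊆ Ā(0,1/2,2)`; (2) `D(0,1/2) ⊆ Q⁻¹(D(0,1/2))`;
(3) `D(0,1/2) ⊆ f⁻¹(H)`. -/
theorem invariant_annulus_and_disc
    (b : ℝ) (hb : b < -6) (n : ℕ) (hn : 1 ≤ n)
    (h2n : 8 * Real.sqrt (-b) ≤ (2 : ℝ) ^ 2 ^ n)
    (f g Q : ℂ → ℂ)
    (hf : f = fun z : ℂ => z ^ 2 ^ n - ((Real.sqrt (-b) : ℝ) : ℂ))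
    (hg : g = fun z : ℂ => z ^ 2 + (b : ℂ))
    (hQ : Q = g ∘ f)
    (H : Set ℂ)
    (hH : H = connectedComponentIn (g ⁻¹' Metric.closedBall 0 2)
      (-((Real.sqrt (-b) : ℝ) : ℂ))) :
    Q ⁻¹' {z : ℂ | 1 / 2 ≤ ‖z‖ ∧ ‖z‖ ≤ 2} ⊆
      {z : ℂ | 1 / 2 ≤ ‖z‖ ∧ ‖z‖ ≤ 2} ∧
    Metric.ball (0 : ℂ) (1 / 2) ⊆ Q ⁻¹' Metric.ball (0 : ℂ) (1 / 2) ∧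
    Metric.ball (0 : ℂ) (1 / 2) ⊆ f ⁻¹' H := by
  set s := Real.sqrt (-b) with hs
  have hb0 : (0:ℝ) < -b := by linarith
  have hs0 : 0 < s := Real.sqrt_pos.mpr hb0
  have hs2 : s ^ 2 = -b := Real.sq_sqrt hb0.le
  set t : ℝ := (2:ℝ) ^ 2 ^ n with ht
  have hk2 : 2 ≤ 2 ^ n := Nat.pow_le_pow_right (by norm_num : 0 < 2) hn
  have hk0 : 2 ^ n ≠ 0 := by positivity
  have ht4 : (4:ℝ) ≤ t := by
    calc (4:ℝ) = 2 ^ 2 := by norm_num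
    _ ≤ 2 ^ 2 ^ n := pow_le_pow_right₀ (by norm_num : (1:ℝ) ≤ 2) hk2
  have ht0 : (0:ℝ) < t := by linarith
  have hsc : ((s:ℝ) : ℂ) ^ 2 = -(b : ℂ) := by
    rw [← Complex.ofReal_pow, hs2]; push_cast; ring
  -- formula for Q
  have hQf : ∀ z : ℂ, Q z = z ^ 2 ^ n * (z ^ 2 ^ n - 2 * (s:ℂ)) := by
    intro z
    simp only [hQ, hf, hg, Function.comp]
    linear_combination hsc
  have habs2s : ‖2 * (s:ℂ)‖ = 2 * s := by
    rw [norm_mul, Complex.norm_real, Real.norm_of_nonneg hs0.le]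
    simp
  -- Lemma A : |z| < 1/2 → |Q z| < 1/2
  have lemA : ∀ z : ℂ, ‖z‖ < 1/2 → ‖Q z‖ < 1/2 := by
    intro z hz
    have hwnn : (0:ℝ) ≤ ‖z ^ 2 ^ n‖ := (norm_nonneg _)
    have hwlt : ‖z ^ 2 ^ n‖ < 1 / t := by
      rw [norm_pow]
      calc ‖z‖ ^ 2 ^ n < (1/2) ^ 2 ^ n :=
        pow_lt_pow_left₀ hz (norm_nonneg z) hk0
      _ = 1 / t := by rw [ht, div_pow]; norm_num
    have hw4 : ‖z ^ 2 ^ n‖ < 1/4 := by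
      have : (1:ℝ)/t ≤ 1/4 := by
        rw [div_le_div_iff₀ ht0 (by norm_num)]; linarith
      linarith
    have h2sw : 2 * s * ‖z ^ 2 ^ n‖ < 1/4 := by
      have h1 : 2 * s * ‖z ^ 2 ^ n‖ < 2 * s * (1/t) :=
        mul_lt_mul_of_pos_left hwlt (by linarith)
      have h2 : 2 * s * (1/t) ≤ 1/4 := by
        rw [mul_one_div, div_le_div_iff₀ ht0 (by norm_num)]; linarith
      linarith
    rw [hQf, norm_mul]
    have hsub : ‖z ^ 2 ^ n - 2 * (s:ℂ)‖ ≤ ‖z ^ 2 ^ n‖ + 2 * s := by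
      have h := norm_sub_le (z ^ 2 ^ n) (2 * (s:ℂ))
      rw [habs2s] at h; exact h
    calc ‖z ^ 2 ^ n‖ * ‖z ^ 2 ^ n - 2 * (s:ℂ)‖ ≤
        ‖z ^ 2 ^ n‖ * (‖z ^ 2 ^ n‖ + 2 * s) :=
      mul_le_mul_of_nonneg_left hsub hwnn
    _ < 1/2 := by nlinarith
  -- Lemma B : |z| > 2 → |Q z| > 2
  have lemB : ∀ z : ℂ, 2 < ‖z‖ → 2 < ‖Q z‖ := by
    intro z hz
    have hwgt : t < ‖z ^ 2 ^ n‖ := by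
      rw [norm_pow, ht]
      exact pow_lt_pow_left₀ hz (by norm_num) hk0
    have hsub : ‖z ^ 2 ^ n‖ - 2 * s ≤ ‖z ^ 2 ^ n - 2 * (s:ℂ)‖ := by
      have h := norm_sub_norm_le (z ^ 2 ^ n) (2 * (s:ℂ))
      rw [habs2s] at h; linarith
    have h3 : (3:ℝ) ≤ ‖z ^ 2 ^ n - 2 * (s:ℂ)‖ := by nlinarith
    have h4 : (4:ℝ) ≤ ‖z ^ 2 ^ n‖ := by linarith
    rw [hQf, norm_mul]
    calc (2:ℝ) < 4 * 3 := by norm_num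
    _ ≤ ‖z ^ 2 ^ n‖ * ‖z ^ 2 ^ n - 2 * (s:ℂ)‖ :=
      mul_le_mul h4 h3 (by norm_num) (by linarith)
  refine ⟨?_, ?_, ?_⟩
  · intro z hz
    simp only [Set.mem_preimage, Set.mem_setOf_eq] at hz ⊢
    constructor
    · by_contra h
      push_neg at h
      exact absurd hz.1 (not_le.mpr (lemA z h))
    · by_contra h
      push_neg at h
      exact absurd hz.2 (not_le.mpr (lemB z h))
  · intro z hz
    simp only [Set.mem_preimage, Metric.mem_ball, Complex.dist_eq, sub_zero] at hz ⊢
    exact lemA z hz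
  · -- part 3
    have hF : f '' Metric.ball (0:ℂ) (1/2) ⊆ g ⁻¹' Metric.closedBall 0 2 := by
      rintro w ⟨z, hz, rfl⟩
      simp only [Metric.mem_ball, Complex.dist_eq, sub_zero] at hz
      have : ‖Q z‖ < 1/2 := lemA z hz
      simp only [Set.mem_preimage, Metric.mem_closedBall, Complex.dist_eq, sub_zero]
      have hQz : g (f z) = Q z := by rw [hQ]; rfl
      rw [hQz]
      linarith
    have hconn : IsPreconnected (f '' Metric.ball (0:ℂ) (1/2)) := by
      apply IsPreconnected.image (convex_ball (0:ℂ) (1/2)).isPreconnected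
      apply Continuous.continuousOn
      rw [hf]
      continuity
    have hmem : -((s:ℝ):ℂ) ∈ f '' Metric.ball (0:ℂ) (1/2) := by
      refine ⟨0, by simp, ?_⟩
      rw [hf]
      simp [zero_pow hk0]
    have hsub := hconn.subset_connectedComponentIn hmem hF
    intro z hz
    rw [hH]
    exact hsub ⟨z, hz, rfl⟩
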